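/- Let Z_1, Z_2, … be i.i.d. random vectors in ℝ^k with common distribution F, where F is absolutely continuous with respect to Lebesgue measure and its support is not contained in any straight line. Fix u ∈ ℝ^k with ‖u‖ < 1, and let Q(u) be the unique minimizer over Q ∈ ℝ^k of E_{Z∼F}[ ‖Z − Q‖ + ⟨u, Z − Q⟩ ]. If Q̂_n(u) denotes, for each n, a minimizer over Q ∈ ℝ^k of (1/n) ∑_{i=1}^n ( ‖Z_i − Q‖ + ⟨u, Z_i − Q⟩ ), then Q̂_n(u) converges almost surely to Q(u) as n → ∞. -/

import Mathlib

open MeasureTheory ProbabilityTheory Filter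
open scoped RealInnerProductSpace Topology

noncomputable def gqf {k : ℕ} (u Q z : EuclideanSpace ℝ (Fin k)) : ℝ :=
  ‖z - Q‖ + ⟪u, z - Q⟫

lemma gqf_lb {k : ℕ} {u : EuclideanSpace ℝ (Fin k)} (Q z : EuclideanSpace ℝ (Fin k)) :
    (1 - ‖u‖) * ‖z - Q‖ ≤ gqf u Q z := by
  have h := abs_le.1 (abs_real_inner_le_norm u (z - Q))
  unfold gqf
  nlinarith [norm_nonneg (z - Q)]

lemma gqf_nonneg {k : ℕ} {u : EuclideanSpace ℝ (Fin k)} (hu : ‖u‖ < 1)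
    (Q z : EuclideanSpace ℝ (Fin k)) : 0 ≤ gqf u Q z :=
  le_trans (by nlinarith [norm_nonneg (z - Q)]) (gqf_lb Q z)

lemma gqf_ub {k : ℕ} {u : EuclideanSpace ℝ (Fin k)} (hu : ‖u‖ < 1)
    (Q z : EuclideanSpace ℝ (Fin k)) : gqf u Q z ≤ 2 * ‖z - Q‖ := by
  have h := abs_le.1 (abs_real_inner_le_norm u (z - Q))
  unfold gqf
  nlinarith [norm_nonneg (z - Q)]

lemma gqf_lip {k : ℕ} {u : EuclideanSpace ℝ (Fin k)} (hu : ‖u‖ < 1)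
    (A B z : EuclideanSpace ℝ (Fin k)) : |gqf u A z - gqf u B z| ≤ 2 * ‖A - B‖ := by
  have h1 : |‖z - A‖ - ‖z - B‖| ≤ ‖A - B‖ := by
    have := abs_norm_sub_norm_le (z - A) (z - B)
    have h2 : (z - A) - (z - B) = B - A := by abel
    rw [h2, norm_sub_rev B A] at this
    exact this
  have h3 : ⟪u, z - A⟫ - ⟪u, z - B⟫ = ⟪u, B - A⟫ := by
    rw [← inner_sub_right]
    congr 1
    abel
  have h4 : |⟪u, B - A⟫| ≤ ‖A - B‖ := by
    have := abs_real_inner_le_norm u (B - A)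
    rw [norm_sub_rev B A] at this
    nlinarith [norm_nonneg (A - B), abs_nonneg (⟪u, B - A⟫)]
  have : gqf u A z - gqf u B z = (‖z - A‖ - ‖z - B‖) + (⟪u, z - A⟫ - ⟪u, z - B⟫) := by
    unfold gqf; ring
  rw [this, h3]
  calc |(‖z - A‖ - ‖z - B‖) + ⟪u, B - A⟫| ≤ |‖z - A‖ - ‖z - B‖| + |⟪u, B - A⟫| := abs_add_le _ _
    _ ≤ ‖A - B‖ + ‖A - B‖ := add_le_add h1 h4
    _ = 2 * ‖A - B‖ := by ring

lemma gqf_convex {k : ℕ} {u : EuclideanSpace ℝ (Fin k)} (A B z : EuclideanSpace ℝ (Fin k))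
    {θ : ℝ} (h0 : 0 ≤ θ) (h1 : θ ≤ 1) :
    gqf u (A + θ • (B - A)) z ≤ (1 - θ) * gqf u A z + θ * gqf u B z := by
  have key : z - (A + θ • (B - A)) = (1 - θ) • (z - A) + θ • (z - B) := by
    module
  unfold gqf
  rw [key]
  have hn : ‖(1 - θ) • (z - A) + θ • (z - B)‖ ≤ (1 - θ) * ‖z - A‖ + θ * ‖z - B‖ := by
    calc ‖(1 - θ) • (z - A) + θ • (z - B)‖ ≤ ‖(1 - θ) • (z - A)‖ + ‖θ • (z - B)‖ :=
          norm_add_le _ _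
      _ = (1 - θ) * ‖z - A‖ + θ * ‖z - B‖ := by
          rw [norm_smul, norm_smul, Real.norm_eq_abs, Real.norm_eq_abs,
            abs_of_nonneg (by linarith : (0:ℝ) ≤ 1 - θ), abs_of_nonneg h0]
  have hi : ⟪u, (1 - θ) • (z - A) + θ • (z - B)⟫ = (1 - θ) * ⟪u, z - A⟫ + θ * ⟪u, z - B⟫ := by
    rw [inner_add_right, real_inner_smul_right, real_inner_smul_right]
  rw [hi]
  linarith

lemma gqf_continuous {k : ℕ} (u Q : EuclideanSpace ℝ (Fin k)) :
    Continuous (fun z => gqf u Q z) := by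
  unfold gqf
  exact ((continuous_id.sub continuous_const).norm).add
    (continuous_const.inner (continuous_id.sub continuous_const))

lemma gqf_continuous' {k : ℕ} (u z : EuclideanSpace ℝ (Fin k)) :
    Continuous (fun Q => gqf u Q z) := by
  unfold gqf
  exact ((continuous_const.sub continuous_id).norm).add
    (continuous_const.inner (continuous_const.sub continuous_id))

lemma gqf_integrable {k : ℕ} {u : EuclideanSpace ℝ (Fin k)} (hu : ‖u‖ < 1)
    {F : Measure (EuclideanSpace ℝ (Fin k))} [IsProbabilityMeasure F]
    {Q0 : EuclideanSpace ℝ (Fin k)} (hint : Integrable (fun z => ‖z - Q0‖) F)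
    (Q' : EuclideanSpace ℝ (Fin k)) : Integrable (gqf u Q') F := by
  refine Integrable.mono' ((hint.const_mul 2).add (integrable_const (2 * ‖Q0 - Q'‖)))
    (gqf_continuous u Q').aestronglyMeasurable (ae_of_all _ fun z => ?_)
  rw [Real.norm_eq_abs, abs_of_nonneg (gqf_nonneg hu Q' z)]
  have h1 : ‖z - Q'‖ ≤ ‖z - Q0‖ + ‖Q0 - Q'‖ := by
    have : z - Q' = (z - Q0) + (Q0 - Q') := by abel
    rw [this]; exact norm_add_le _ _
  have := gqf_ub hu Q' z
  simp only [Pi.add_apply]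
  linarith

lemma gq_integral_lip {k : ℕ} {u : EuclideanSpace ℝ (Fin k)} (hu : ‖u‖ < 1)
    {F : Measure (EuclideanSpace ℝ (Fin k))} [IsProbabilityMeasure F]
    {A B : EuclideanSpace ℝ (Fin k)}
    (hA : Integrable (gqf u A) F) (hB : Integrable (gqf u B) F) :
    |∫ z, gqf u A z ∂F - ∫ z, gqf u B z ∂F| ≤ 2 * ‖A - B‖ := by
  rw [← integral_sub hA hB]
  calc |∫ z, (gqf u A z - gqf u B z) ∂F| ≤ ∫ z, |gqf u A z - gqf u B z| ∂F := by
        simpa [Real.norm_eq_abs] using norm_integral_le_integral_norm (fun z => gqf u A z - gqf u B z) (μ := F)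
    _ ≤ ∫ _z, 2 * ‖A - B‖ ∂F := by
        refine integral_mono ((hA.sub hB).abs) (integrable_const _) fun z => gqf_lip hu A B z
    _ = 2 * ‖A - B‖ := by simp

noncomputable def gqg {k : ℕ} (u : EuclideanSpace ℝ (Fin k))
    (F : Measure (EuclideanSpace ℝ (Fin k))) : EuclideanSpace ℝ (Fin k) → ℝ :=
  fun Q' => ∫ z, gqf u Q' z ∂F

noncomputable def gqfn {k : ℕ} {Ω : Type*} (u : EuclideanSpace ℝ (Fin k))
    (Z : ℕ → Ω → EuclideanSpace ℝ (Fin k)) (ω : Ω) (n : ℕ)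
    (W : EuclideanSpace ℝ (Fin k)) : ℝ :=
  (1/(n:ℝ)) * ∑ i ∈ Finset.range n, gqf u W (Z i ω)

lemma gqfn_lip {k : ℕ} {Ω : Type*} {u : EuclideanSpace ℝ (Fin k)} (hu : ‖u‖ < 1)
    (Z : ℕ → Ω → EuclideanSpace ℝ (Fin k)) (ω : Ω) (n : ℕ)
    (A B : EuclideanSpace ℝ (Fin k)) :
    |gqfn u Z ω n A - gqfn u Z ω n B| ≤ 2 * ‖A - B‖ := by
  have h1 : gqfn u Z ω n A - gqfn u Z ω n B
      = (1/(n:ℝ)) * ∑ i ∈ Finset.range n, (gqf u A (Z i ω) - gqf u B (Z i ω)) := by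
    unfold gqfn
    rw [Finset.sum_sub_distrib]
    ring
  rw [h1, abs_mul]
  have h2 : |∑ i ∈ Finset.range n, (gqf u A (Z i ω) - gqf u B (Z i ω))|
      ≤ (n : ℝ) * (2 * ‖A - B‖) := by
    calc |∑ i ∈ Finset.range n, (gqf u A (Z i ω) - gqf u B (Z i ω))|
        ≤ ∑ i ∈ Finset.range n, |gqf u A (Z i ω) - gqf u B (Z i ω)| :=
          Finset.abs_sum_le_sum_abs _ _
      _ ≤ ∑ _i ∈ Finset.range n, 2 * ‖A - B‖ :=
          Finset.sum_le_sum fun i _ => gqf_lip hu A B _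
      _ = (n : ℝ) * (2 * ‖A - B‖) := by
          rw [Finset.sum_const, Finset.card_range, nsmul_eq_mul]
  rcases Nat.eq_zero_or_pos n with h | h
  · subst h; simp
  · have hn0 : (0:ℝ) < n := by exact_mod_cast h
    have habs : |1/(n:ℝ)| = 1/(n:ℝ) := abs_of_nonneg (by positivity)
    rw [habs]
    calc (1/(n:ℝ)) * |∑ i ∈ Finset.range n, (gqf u A (Z i ω) - gqf u B (Z i ω))|
        ≤ (1/(n:ℝ)) * ((n:ℝ) * (2 * ‖A - B‖)) := by
          exact mul_le_mul_of_nonneg_left h2 (by positivity)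
      _ = 2 * ‖A - B‖ := by field_simp

lemma gqfn_convex {k : ℕ} {Ω : Type*} (u : EuclideanSpace ℝ (Fin k))
    (Z : ℕ → Ω → EuclideanSpace ℝ (Fin k)) (ω : Ω) (n : ℕ)
    (A B : EuclideanSpace ℝ (Fin k)) {θ : ℝ} (h0 : 0 ≤ θ) (h1 : θ ≤ 1) :
    gqfn u Z ω n (A + θ • (B - A)) ≤ (1 - θ) * gqfn u Z ω n A + θ * gqfn u Z ω n B := by
  unfold gqfn
  have key : ∑ i ∈ Finset.range n, gqf u (A + θ • (B - A)) (Z i ω)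
      ≤ ∑ i ∈ Finset.range n, ((1 - θ) * gqf u A (Z i ω) + θ * gqf u B (Z i ω)) :=
    Finset.sum_le_sum fun i _ => gqf_convex A B (Z i ω) h0 h1
  calc (1/(n:ℝ)) * ∑ i ∈ Finset.range n, gqf u (A + θ • (B - A)) (Z i ω)
      ≤ (1/(n:ℝ)) * ∑ i ∈ Finset.range n,
          ((1 - θ) * gqf u A (Z i ω) + θ * gqf u B (Z i ω)) :=
        mul_le_mul_of_nonneg_left key (by positivity)
    _ = (1 - θ) * ((1/(n:ℝ)) * ∑ i ∈ Finset.range n, gqf u A (Z i ω))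
        + θ * ((1/(n:ℝ)) * ∑ i ∈ Finset.range n, gqf u B (Z i ω)) := by
        rw [Finset.sum_add_distrib, ← Finset.mul_sum, ← Finset.mul_sum]
        ring
open scoped RealInnerProductSpace

/-- Asymptotic convergence of sample geometric quantiles: For i.i.d. data
`Z 0, Z 1, …` with common law `F` absolutely continuous w.r.t. Lebesgue measure and support
not contained in a straight line, and `‖u‖ < 1`, any sequence of sample geometric quantiles
at `u` converges almost surely to the (unique) population geometric quantile at `u`. -/
theorem stmt_8 {k : ℕ} {Ω : Type*} [MeasurableSpace Ω]
    (P : Measure Ω) [IsProbabilityMeasure P]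
    (Z : ℕ → Ω → EuclideanSpace ℝ (Fin k))
    (hmeas : ∀ i, Measurable (Z i))
    (hindep : iIndepFun Z P)
    (F : Measure (EuclideanSpace ℝ (Fin k))) [IsProbabilityMeasure F]
    (hlaw : ∀ i, Measure.map (Z i) P = F)
    (habs : F ≪ volume)
    (hline : ∀ a v : EuclideanSpace ℝ (Fin k),
      F {x : EuclideanSpace ℝ (Fin k) | ∃ t : ℝ, x = a + t • v} < 1)
    (u : EuclideanSpace ℝ (Fin k)) (hu : ‖u‖ < 1)
    (Q : EuclideanSpace ℝ (Fin k))
    (hQmin : ∀ Q' : EuclideanSpace ℝ (Fin k),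
      ∫ z, (‖z - Q‖ + ⟪u, z - Q⟫) ∂F ≤ ∫ z, (‖z - Q'‖ + ⟪u, z - Q'⟫) ∂F)
    (hQuniq : ∀ Q'' : EuclideanSpace ℝ (Fin k),
      (∀ Q' : EuclideanSpace ℝ (Fin k),
        ∫ z, (‖z - Q''‖ + ⟪u, z - Q''⟫) ∂F ≤ ∫ z, (‖z - Q'‖ + ⟪u, z - Q'⟫) ∂F) → Q'' = Q)
    (Qhat : ℕ → Ω → EuclideanSpace ℝ (Fin k))
    (hQhat : ∀ (n : ℕ) (ω : Ω), ∀ Q' : EuclideanSpace ℝ (Fin k),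
      (1 / (n : ℝ)) * ∑ i ∈ Finset.range n, (‖Z i ω - Qhat n ω‖ + ⟪u, Z i ω - Qhat n ω⟫) ≤
      (1 / (n : ℝ)) * ∑ i ∈ Finset.range n, (‖Z i ω - Q'‖ + ⟪u, Z i ω - Q'⟫)) :
    ∀ᵐ ω ∂P, Tendsto (fun n => Qhat n ω) atTop (nhds Q) := by
  classical
  -- restate hypotheses in terms of `gqf`, `gqg`, `gqfn`
  have hQmin' : ∀ Q', gqg u F Q ≤ gqg u F Q' := hQmin
  have hQuniq' : ∀ Q'', (∀ Q', gqg u F Q'' ≤ gqg u F Q') → Q'' = Q := hQuniq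
  have hQhat' : ∀ n ω Q', gqfn u Z ω n (Qhat n ω) ≤ gqfn u Z ω n Q' := hQhat
  -- k is positive
  have hk : 0 < k := by
    rcases Nat.eq_zero_or_pos k with hk0 | hk
    · exfalso
      subst hk0
      have h1 := hline 0 0
      have h2 : {x : EuclideanSpace ℝ (Fin 0) | ∃ t : ℝ, x = 0 + t • 0} = Set.univ := by
        ext x
        simp only [Set.mem_setOf_eq, Set.mem_univ, iff_true]
        exact ⟨0, Subsingleton.elim _ _⟩
      rw [h2, measure_univ] at h1
      exact lt_irrefl _ h1
    · exact hk
  have hnt : Nontrivial (EuclideanSpace ℝ (Fin k)) := by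
    refine ⟨⟨EuclideanSpace.single ⟨0, hk⟩ (1:ℝ), 0, ?_⟩⟩
    intro h
    have := congrArg (fun x => x ⟨0, hk⟩) h
    simp [EuclideanSpace.single] at this
  -- integrability
  have hZint : Integrable (fun z => ‖z - Q‖) F := by
    by_contra hnon
    have hnint : ∀ Q'' : EuclideanSpace ℝ (Fin k), ¬ Integrable (gqf u Q'') F := by
      intro Q'' hI
      apply hnon
      have hpos : (0:ℝ) < 1 - ‖u‖ := by linarith
      have h1 : Integrable (fun z => ‖z - Q''‖) F := by
        refine Integrable.mono' (hI.const_mul ((1 - ‖u‖)⁻¹))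
          ((continuous_id.sub continuous_const).norm).aestronglyMeasurable
          (ae_of_all _ fun z => ?_)
        rw [Real.norm_eq_abs, abs_of_nonneg (norm_nonneg _)]
        calc ‖z - Q''‖ = (1 - ‖u‖)⁻¹ * ((1 - ‖u‖) * ‖z - Q''‖) := by field_simp
          _ ≤ (1 - ‖u‖)⁻¹ * gqf u Q'' z :=
              mul_le_mul_of_nonneg_left (gqf_lb Q'' z) (by positivity)
      refine Integrable.mono' (h1.add (integrable_const ‖Q'' - Q‖))
        ((continuous_id.sub continuous_const).norm).aestronglyMeasurable
        (ae_of_all _ fun z => ?_)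
      rw [Real.norm_eq_abs, abs_of_nonneg (norm_nonneg _)]
      simp only [Pi.add_apply]
      have hzz : z - Q = (z - Q'') + (Q'' - Q) := by abel
      rw [hzz]
      exact norm_add_le _ _
    have hall : ∀ Q'' : EuclideanSpace ℝ (Fin k), Q'' = Q := by
      intro Q''
      apply hQuniq'
      intro Q'
      have h0 : gqg u F Q'' = 0 := integral_undef (hnint Q'')
      have h1 : (0:ℝ) ≤ gqg u F Q' := integral_nonneg fun z => gqf_nonneg hu Q' z
      rw [h0]
      exact h1
    have h1 := hall (Q + EuclideanSpace.single ⟨0,hk⟩ (1:ℝ))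
    have h2 : EuclideanSpace.single (⟨0,hk⟩ : Fin k) (1:ℝ) = 0 := by
      have := congrArg (fun x => x - Q) h1
      simpa using this
    have h3 := congrArg (fun x => x ⟨0, hk⟩) h2
    simp [EuclideanSpace.single] at h3
  have hgint : ∀ Q', Integrable (gqf u Q') F := fun Q' => gqf_integrable hu hZint Q'
  have hglip : ∀ A B, |gqg u F A - gqg u F B| ≤ 2 * ‖A - B‖ :=
    fun A B => gq_integral_lip hu (hgint A) (hgint B)
  have hgcont : Continuous (gqg u F) := by
    refine (LipschitzWith.of_dist_le_mul (K := 2) fun A B => ?_).continuous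
    rw [Real.dist_eq, dist_eq_norm]
    exact_mod_cast hglip A B
  -- strong law at each point
  have slln : ∀ p : EuclideanSpace ℝ (Fin k), ∀ᵐ ω ∂P,
      Tendsto (fun n => gqfn u Z ω n p) atTop (𝓝 (gqg u F p)) := by
    intro p
    have hmgp : Measurable (gqf u p) := (gqf_continuous u p).measurable
    set X : ℕ → Ω → ℝ := fun i ω => gqf u p (Z i ω) with hX
    have hXint : Integrable (X 0) P := by
      have h1 : Integrable (gqf u p) (Measure.map (Z 0) P) := by rw [hlaw 0]; exact hgint p
      exact (integrable_map_measure (gqf_continuous u p).aestronglyMeasurable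
        (hmeas 0).aemeasurable).1 h1
    have hident : ∀ i, IdentDistrib (X i) (X 0) P P := by
      intro i
      have hZid : IdentDistrib (Z i) (Z 0) P P :=
        ⟨(hmeas i).aemeasurable, (hmeas 0).aemeasurable, by rw [hlaw i, hlaw 0]⟩
      exact hZid.comp hmgp
    have hpind : Pairwise (Function.onFun (IndepFun · · P) X) := by
      intro i j hij
      exact (hindep.comp (fun _ => gqf u p) (fun _ => hmgp)).indepFun hij
    have hexp : P[X 0] = gqg u F p := by
      show ∫ ω, gqf u p (Z 0 ω) ∂P = ∫ z, gqf u p z ∂F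
      rw [← hlaw 0, integral_map (hmeas 0).aemeasurable
        (gqf_continuous u p).aestronglyMeasurable]
    have hsl := strong_law_ae_real X hXint hpind hident
    rw [hexp] at hsl
    refine hsl.mono fun ω h => ?_
    have hfe : (fun n => gqfn u Z ω n p)
        = fun n : ℕ => (∑ i ∈ Finset.range n, X i ω) / n := by
      funext n
      unfold gqfn
      rw [one_div_mul_eq_div]
    rw [hfe]
    exact h
  -- countable dense set
  obtain ⟨D, Dcount, Ddense⟩ :=
    TopologicalSpace.exists_countable_dense (EuclideanSpace ℝ (Fin k))
  have hae : ∀ᵐ ω ∂P, ∀ p ∈ D,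
      Tendsto (fun n => gqfn u Z ω n p) atTop (𝓝 (gqg u F p)) :=
    (ae_ball_iff Dcount).2 fun p _ => slln p
  filter_upwards [hae] with ω hω
  rw [Metric.tendsto_nhds]
  intro ε hε
  set ε' := min ε 1 with hε'def
  have hε'pos : 0 < ε' := lt_min hε one_pos
  have hε'le1 : ε' ≤ 1 := min_le_right _ _
  -- minimum of g on the sphere of radius ε'
  obtain ⟨Qs, hQsS, hQsmin⟩ := (isCompact_sphere Q ε').exists_isMinOn
    (NormedSpace.sphere_nonempty.2 hε'pos.le) hgcont.continuousOn
  have hQsne : Qs ≠ Q := by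
    intro h
    rw [h, Metric.mem_sphere, dist_self] at hQsS
    exact absurd hQsS.symm (ne_of_gt hε'pos)
  have hgQs : gqg u F Q < gqg u F Qs := by
    rcases lt_or_eq_of_le (hQmin' Qs) with h | h
    · exact h
    · exact absurd (hQuniq' Qs fun Q' => h ▸ hQmin' Q') hQsne
  set δ := (gqg u F Qs - gqg u F Q) / 3 with hδdef
  have hδpos : 0 < δ := by rw [hδdef]; linarith
  -- uniform convergence on the closed unit ball around Q
  have hunif : ∀ᶠ n in atTop, ∀ W ∈ Metric.closedBall Q 1,
      |gqfn u Z ω n W - gqg u F W| < δ := by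
    set r := δ / 9 with hrdef
    have hrpos : 0 < r := by positivity
    have hcov : Metric.closedBall Q 1 ⊆ ⋃ p ∈ D, Metric.ball p r := by
      intro x _
      obtain ⟨p, hpD, hp⟩ := Ddense.exists_dist_lt x hrpos
      exact Set.mem_biUnion hpD (Metric.mem_ball.2 hp)
    obtain ⟨T, hTD, hTfin, hTcov⟩ := (isCompact_closedBall Q 1).elim_finite_subcover_image
      (fun p _ => Metric.isOpen_ball) hcov
    have hev : ∀ᶠ n in atTop, ∀ p ∈ T, |gqfn u Z ω n p - gqg u F p| < δ / 3 := by
      rw [eventually_all_finite hTfin]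
      intro p hp
      have ht := hω p (hTD hp)
      have h4 := Metric.tendsto_nhds.1 ht (δ/3) (by positivity)
      exact h4.mono fun n h => by rwa [Real.dist_eq] at h
    filter_upwards [hev] with n hn W hW
    obtain ⟨p, hpT, hpW⟩ : ∃ p ∈ T, W ∈ Metric.ball p r := by simpa using hTcov hW
    have h1 : |gqfn u Z ω n W - gqfn u Z ω n p| ≤ 2 * ‖W - p‖ := gqfn_lip hu Z ω n W p
    have h2 : |gqg u F p - gqg u F W| ≤ 2 * ‖p - W‖ := hglip p W
    have h3 : ‖W - p‖ < r := by rw [← dist_eq_norm]; exact hpW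
    have h3' : ‖p - W‖ < r := by rwa [norm_sub_rev]
    have htri : |gqfn u Z ω n W - gqg u F W| ≤ |gqfn u Z ω n W - gqfn u Z ω n p|
        + |gqfn u Z ω n p - gqg u F p| + |gqg u F p - gqg u F W| := by
      calc |gqfn u Z ω n W - gqg u F W|
          ≤ |gqfn u Z ω n W - gqg u F p| + |gqg u F p - gqg u F W| := abs_sub_le _ _ _
        _ ≤ |gqfn u Z ω n W - gqfn u Z ω n p| + |gqfn u Z ω n p - gqg u F p|
            + |gqg u F p - gqg u F W| := by
            have := abs_sub_le (gqfn u Z ω n W) (gqfn u Z ω n p) (gqg u F p)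
            linarith
    have hnp := hn p hpT
    rw [hrdef] at h3 h3'
    linarith
  filter_upwards [hunif] with n hn
  show dist (Qhat n ω) Q < ε
  have key : dist (Qhat n ω) Q < ε' := by
    by_contra hge
    push_neg at hge
    set d := dist (Qhat n ω) Q with hd
    have hdpos : 0 < d := lt_of_lt_of_le hε'pos hge
    set θ := ε' / d with hθdef
    have hθ0 : 0 ≤ θ := by positivity
    have hθ1 : θ ≤ 1 := by rw [hθdef]; exact div_le_one_of_le₀ hge hdpos.le
    set W := Q + θ • (Qhat n ω - Q) with hWdef
    have hWQ : ‖W - Q‖ = ε' := by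
      have h1 : W - Q = θ • (Qhat n ω - Q) := by rw [hWdef]; abel
      rw [h1, norm_smul, Real.norm_eq_abs, abs_of_nonneg hθ0, hθdef]
      rw [← dist_eq_norm, ← hd]
      field_simp
    have hWS : W ∈ Metric.sphere Q ε' := by rw [Metric.mem_sphere, dist_eq_norm, hWQ]
    have hWball : W ∈ Metric.closedBall Q 1 := by
      rw [Metric.mem_closedBall, dist_eq_norm, hWQ]; exact hε'le1
    have hQball : Q ∈ Metric.closedBall Q 1 := Metric.mem_closedBall_self zero_le_one
    have hfnW : gqfn u Z ω n W ≤ gqfn u Z ω n Q := by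
      calc gqfn u Z ω n W ≤ (1 - θ) * gqfn u Z ω n Q + θ * gqfn u Z ω n (Qhat n ω) :=
            gqfn_convex u Z ω n Q (Qhat n ω) hθ0 hθ1
        _ ≤ (1 - θ) * gqfn u Z ω n Q + θ * gqfn u Z ω n Q := by
            exact add_le_add_right (mul_le_mul_of_nonneg_left (hQhat' n ω Q) hθ0) _
        _ = gqfn u Z ω n Q := by ring
    have hQs_le : gqg u F Qs ≤ gqg u F W := hQsmin hWS
    have haW := abs_lt.1 (hn W hWball)
    have haQ := abs_lt.1 (hn Q hQball)
    have : gqg u F Qs < gqg u F Qs := by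
      calc gqg u F Qs ≤ gqg u F W := hQs_le
        _ < gqfn u Z ω n W + δ := by linarith [haW.1]
        _ ≤ gqfn u Z ω n Q + δ := by linarith
        _ < gqg u F Q + 2 * δ := by linarith [haQ.2]
        _ < gqg u F Qs := by rw [hδdef]; linarith
    exact lt_irrefl _ this
  exact lt_of_lt_of_le key (min_le_left _ _)
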